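/- Let β > 0 and p > 0, and suppose 0 < γ ≤ 2. Then there is no u > 0 satisfying γ − 1 − γu = exp(−β((1+u)^{−p} − 1)); consequently the rioting-activity system has no constant state with u > 0 in the open first quadrant. -/
import Mathlib


open Real

/-- for `0 < γ ≤ 2` there is no positive solution of the transcendental
equation, and hence no constant state of the rioting-activity system with `u > 0`
in the open first quadrant. -/
theorem no_excited_state_of_gamma_le_two
    (β p γ : ℝ) (hβ : 0 < β) (hp : 0 < p) (hγ0 : 0 < γ) (hγ : γ ≤ 2) :
    (∀ u : ℝ, 0 < u → γ - 1 - γ * u ≠ Real.exp (-(β * ((1 + u) ^ (-p) - 1)))) ∧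
    ¬ ∃ u v : ℝ, 0 < u ∧ 0 < v ∧
        γ / (1 + Real.exp (-(β * (v - 1)))) * u * (1 - u) - u = 0 ∧
        1 - (1 + u) ^ p * v = 0 := by
  have key : ∀ u : ℝ, 0 < u → γ - 1 - γ * u ≠ Real.exp (-(β * ((1 + u) ^ (-p) - 1))) := by
    intro u hu heq
    have h1u : (1:ℝ) < 1 + u := by linarith
    have hrp : (1 + u) ^ (-p) < 1 :=
      Real.rpow_lt_one_of_one_lt_of_neg h1u (by linarith)
    have hpos : 0 < -(β * ((1 + u) ^ (-p) - 1)) := by nlinarith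
    have hexp : 1 < Real.exp (-(β * ((1 + u) ^ (-p) - 1))) := by
      calc (1:ℝ) = Real.exp 0 := by simp
        _ < _ := Real.exp_lt_exp.mpr hpos
    have hγu : 0 < γ * u := mul_pos hγ0 hu
    nlinarith [heq]
  refine ⟨key, ?_⟩
  rintro ⟨u, v, hu, hv, h1, h2⟩
  have h1u : (0:ℝ) < 1 + u := by linarith
  have hpow : (0:ℝ) < (1 + u) ^ p := Real.rpow_pos_of_pos h1u p
  have hveq : v = (1 + u) ^ (-p) := by
    rw [Real.rpow_neg h1u.le]
    field_simp at h2 ⊢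
    linarith
  have hD : 0 < 1 + Real.exp (-(β * (v - 1))) := by positivity
  have h1' : γ * (1 - u) = 1 + Real.exp (-(β * (v - 1))) := by
    have h3 : γ * u * (1 - u) = (1 + Real.exp (-(β * (v - 1)))) * u := by
      field_simp at h1
      linarith
    have h4 : (γ * (1 - u) - (1 + Real.exp (-(β * (v - 1))))) * u = 0 := by ring_nf; ring_nf at h3; linarith
    rcases mul_eq_zero.mp h4 with h | h
    · linarith
    · exact absurd h hu.ne'
  apply key u hu
  rw [← hveq]
  linarith
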